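/- Let G be a countable locally finite group and {F_n} a Følner sequence for G. For a real number r, the following are equivalent: (i) there exist a finite alphabet A and a nonempty G-SFT X ⊆ A^G such that log|L_{F_n}(X)| / |F_n| → r; (ii) there exist a finite subgroup H ≤ G and a natural number n ≥ 1 such that r = log(n) / |H|, where |H| is the cardinality of H. In other words, the set of topological entropies of G-SFTs is exactly { log(n)/|H| : H a finite subgroup of G, n ∈ ℕ, n ≥ 1 }. -/

import Mathlib

open scoped Pointwise symmDiff

namespace LFPaper

variable {G A B : Type*}

/-- The right shift action: `(shift g x) h = x (h * g)`. -/
def shift [Group G] (g : G) (x : G → A) : G → A := fun h => x (h * g)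

/-- Restriction of a configuration to a finite shape. -/
def restrictF (F : Finset G) (x : G → A) : F → A := fun a => x a

/-- A `G`-shift space: a closed, shift-invariant subset of the full shift. -/
def IsShiftSpace [Group G] [TopologicalSpace A] (X : Set (G → A)) : Prop :=
  IsClosed X ∧ ∀ g : G, ∀ x ∈ X, shift g x ∈ X

/-- A `G`-shift of finite type: the set of configurations avoiding a finite
set of forbidden patterns on a finite shape. -/
def IsSFT [Group G] (X : Set (G → A)) : Prop :=
  ∃ (F : Finset G) (P : Set (F → A)),
    X = {x : G → A | ∀ g : G, restrictF F (shift g x) ∉ P}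

/-- The `F`-language of `X`: all restrictions of elements of `X` to `F`. -/
def language (X : Set (G → A)) (F : Finset G) : Set (F → A) :=
  {w | ∃ x ∈ X, restrictF F x = w}

/-- Strong irreducibility of a shift. -/
def StronglyIrreducible [Group G] (X : Set (G → A)) : Prop :=
  ∃ K : Finset G, ∀ (Fu Fv : Finset G) (u : Fu → A) (v : Fv → A),
    Disjoint (Fu : Set G) ((K : Set G) * (Fv : Set G)) →
    u ∈ language X Fu → v ∈ language X Fv →
    ∃ x ∈ X, restrictF Fu x = u ∧ restrictF Fv x = v

/-- The free `G`-extension of an `H`-shift `Y`: all configurations whose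
restriction to every right coset of `H` (pulled back to `H`) lies in `Y`. -/
def freeExt [Group G] (H : Subgroup G) (Y : Set (H → A)) : Set (G → A) :=
  {x : G → A | ∀ g : G, (fun h : H => x ((h : G) * g)) ∈ Y}

/-- Local finiteness of a group: every finitely generated subgroup is finite. -/
def IsLocallyFinite (G : Type*) [Group G] : Prop :=
  ∀ S : Finset G, Finite ↥(Subgroup.closure (S : Set G))

/-- A (left) Følner sequence for a countable group. -/
def IsFolner [Group G] (F : ℕ → Finset G) : Prop :=
  (∀ n, (F n).Nonempty) ∧ (∀ g : G, ∃ n, g ∈ F n) ∧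
  ∀ g : G, Filter.Tendsto
    (fun n => (Set.ncard ((((fun h => g * h) '' (F n : Set G))) ∆ ((F n : Set G))) : ℝ) /
      ((F n).card : ℝ))
    Filter.atTop (nhds 0)

/-- Cardinality of the `F`-language. -/
noncomputable def langCard (X : Set (G → A)) (F : Finset G) : ℕ :=
  (language X F).ncard

/-- A shift-commuting self-homeomorphism of `X` (an automorphism of the shift `X`). -/
def IsAutomorphism [Group G] [TopologicalSpace A] (X : Set (G → A)) (φ : Equiv.Perm X) : Prop :=
  Continuous φ ∧ Continuous φ.symm ∧
  ∀ (g : G) (x y : X), (y : G → A) = shift g (x : G → A) →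
    (φ y : G → A) = shift g ((φ x : G → A))

noncomputable def rep [Group G] (H : Subgroup G) (g : G) : G :=
  (Quotient.mk (QuotientGroup.rightRel H) g).out

lemma rep_spec [Group G] (H : Subgroup G) (g : G) : g * (rep H g)⁻¹ ∈ H := by
  have h := Quotient.mk_out (s := QuotientGroup.rightRel H) g
  exact QuotientGroup.rightRel_apply.mp h

lemma rep_spec' [Group G] (H : Subgroup G) (g : G) : rep H g * g⁻¹ ∈ H := by
  have := H.inv_mem (rep_spec H g); simpa using this

lemma rep_H_mul [Group G] (H : Subgroup G) (h : H) (g : G) :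
    rep H ((h : G) * g) = rep H g := by
  unfold rep; congr 1; apply Quotient.sound
  exact QuotientGroup.rightRel_apply.mpr (by simpa using h.2)

lemma rep_rep [Group G] (H : Subgroup G) (g : G) : rep H (rep H g) = rep H g := by
  have h1 : rep H g = ((⟨rep H g * g⁻¹, rep_spec' H g⟩ : H) : G) * g := by
    show rep H g = (rep H g * g⁻¹) * g; group
  conv_lhs => rw [h1]
  rw [rep_H_mul]

lemma rep_decomp [Group G] (H : Subgroup G) (g : G) :
    ((⟨g * (rep H g)⁻¹, rep_spec H g⟩ : H) : G) * rep H g = g := by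
  show (g * (rep H g)⁻¹) * rep H g = g; group

lemma rep_of_mem_image [Group G] [DecidableEq G] (H : Subgroup G) {Fn : Finset G} {t : G}
    (ht : t ∈ Fn.image (rep H)) : rep H t = t := by
  obtain ⟨a, -, rfl⟩ := Finset.mem_image.mp ht
  exact rep_rep H a

lemma sdiff_subset_symmDiff {α : Type*} [DecidableEq α] (s t : Finset α) :
    s \ t ⊆ s ∆ t := by
  intro a ha
  rw [Finset.mem_symmDiff]
  rw [Finset.mem_sdiff] at ha
  exact Or.inl ha

lemma symmDiff_comm_subset {α : Type*} [DecidableEq α] (s t : Finset α) :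
    t \ s ⊆ s ∆ t := by
  intro a ha
  rw [Finset.mem_symmDiff]
  rw [Finset.mem_sdiff] at ha
  exact Or.inr ha

lemma finite_language [Group G] [Fintype A] (X : Set (G → A)) (Fn : Finset G) :
    Finite ↥(language X Fn) := (Set.toFinite _).to_subtype

lemma langCard_le_pow [Group G] [DecidableEq G] [Fintype A] (H : Subgroup G) [Finite ↥H]
    (Y : Set ((↥H) → A)) (Fn : Finset G) :
    langCard (freeExt H Y) Fn ≤ Y.ncard ^ (Fn.image (rep H)).card := by
  classical
  set X := freeExt H Y with hX
  have hfin := finite_language X Fn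
  set Cm := Fn.image (rep H) with hCm
  have hchoice : ∀ w : ↥(language X Fn), ∃ x, x ∈ X ∧ restrictF Fn x = ↑w := by
    intro w; obtain ⟨x, hx, hr⟩ := w.2; exact ⟨x, hx, hr⟩
  choose xw hxwX hxwR using hchoice
  set ψ : ↥(language X Fn) → (↥Cm → ↥Y) :=
    fun w t => ⟨fun h => xw w ((h : G) * (t : G)), hxwX w (t : G)⟩ with hψ
  have hinj : Function.Injective ψ := by
    intro w w' hww
    ext a
    have h1 : (w : (↥Fn) → A) a = xw w (a : G) := by rw [← hxwR w]; rfl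
    have h2 : (w' : (↥Fn) → A) a = xw w' (a : G) := by rw [← hxwR w']; rfl
    have hm : rep H (a : G) ∈ Cm := Finset.mem_image_of_mem _ a.2
    have key := congrFun (congrArg Subtype.val (congrFun hww ⟨rep H (a : G), hm⟩))
      ⟨(a : G) * (rep H (a : G))⁻¹, rep_spec H (a : G)⟩
    simp only [hψ] at key
    rw [h1, h2, ← rep_decomp H (a : G)]
    exact key
  calc langCard X Fn = Nat.card ↥(language X Fn) := (Nat.card_coe_set_eq _).symm
    _ ≤ Nat.card (↥Cm → ↥Y) := Nat.card_le_card_of_injective ψ hinj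
    _ = Nat.card ↥Y ^ Nat.card ↥Cm := Nat.card_fun
    _ = Y.ncard ^ Cm.card := by
        rw [Nat.card_coe_set_eq, Nat.card_eq_fintype_card, Fintype.card_coe]

lemma pow_le_langCard [Group G] [DecidableEq G] [Fintype A] (H : Subgroup G) [Finite ↥H]
    (Y : Set ((↥H) → A)) {Fn : Finset G}
    [DecidablePred fun t => ∀ h : ↥H, (h : G) * t ∈ Fn] (hYne : Y.Nonempty)
    (hYinv : ∀ y ∈ Y, ∀ h₀ : ↥H, (fun h => y (h * h₀)) ∈ Y) :
    Y.ncard ^ ((Fn.image (rep H)).filter (fun t => ∀ h : ↥H, (h : G) * t ∈ Fn)).card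
      ≤ langCard (freeExt H Y) Fn := by
  classical
  obtain ⟨y₀, hy₀⟩ := hYne
  set X := freeExt H Y with hX
  have hfin := finite_language X Fn
  set Cin := (Fn.image (rep H)).filter (fun t => ∀ h : ↥H, (h : G) * t ∈ Fn) with hCin
  set z : (↥Cin → ↥Y) → G → (↥H → A) := fun f g =>
    if hg : rep H g ∈ Cin then (f ⟨rep H g, hg⟩ : ↥H → A) else y₀ with hz
  have hzY : ∀ f g, z f g ∈ Y := by
    intro f g; simp only [hz]; split
    · exact (f _).2
    · exact hy₀
  have hzinv : ∀ f (h : ↥H) g, z f ((h : G) * g) = z f g := by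
    intro f h g; simp only [hz, rep_H_mul]
  set xf : (↥Cin → ↥Y) → G → A := fun f g =>
    z f g ⟨g * (rep H g)⁻¹, rep_spec H g⟩ with hxf
  have hxfX : ∀ f, xf f ∈ X := by
    intro f g
    have heq : (fun h : ↥H => xf f ((h : G) * g))
        = fun h : ↥H => z f g (h * ⟨g * (rep H g)⁻¹, rep_spec H g⟩) := by
      funext h
      simp only [hxf]
      rw [hzinv]
      congr 1
      ext
      simp only [Subgroup.coe_mul]
      rw [rep_H_mul]
      group
    rw [heq]
    exact hYinv _ (hzY f g) _
  have hval : ∀ f (t : ↥Cin) (h : ↥H), xf f ((h : G) * (t : G)) = (f t : ↥H → A) h := by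
    intro f t h
    have htm : rep H (t : G) = (t : G) :=
      rep_of_mem_image H (Finset.mem_filter.mp t.2).1
    have hrep : rep H ((h : G) * (t : G)) = (t : G) := by rw [rep_H_mul, htm]
    simp only [hxf, hz]
    have harg : (⟨(h : G) * (t : G) * (rep H ((h : G) * (t : G)))⁻¹,
        rep_spec H _⟩ : ↥H) = h := by
      ext; simp only [hrep]; group
    rw [harg]
    have hin : rep H ((h : G) * (t : G)) ∈ Cin := by rw [hrep]; exact t.2
    rw [dif_pos hin]
    have : (⟨rep H ((h : G) * (t : G)), hin⟩ : ↥Cin) = t := Subtype.ext hrep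
    rw [this]
  set χ : (↥Cin → ↥Y) → ↥(language X Fn) :=
    fun f => ⟨restrictF Fn (xf f), ⟨xf f, hxfX f, rfl⟩⟩ with hχ
  have hinj : Function.Injective χ := by
    intro f f' hff
    funext t
    apply Subtype.ext
    funext h
    have htFn : (h : G) * (t : G) ∈ Fn := (Finset.mem_filter.mp t.2).2 h
    have := congrFun (congrArg Subtype.val hff) ⟨(h : G) * (t : G), htFn⟩
    simp only [hχ, restrictF] at this
    rw [← hval f t h, ← hval f' t h]
    exact this
  calc Y.ncard ^ Cin.card = Nat.card ↥Y ^ Nat.card ↥Cin := by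
        rw [Nat.card_coe_set_eq, Nat.card_eq_fintype_card, Fintype.card_coe]
    _ = Nat.card (↥Cin → ↥Y) := Nat.card_fun.symm
    _ ≤ Nat.card ↥(language X Fn) := Nat.card_le_card_of_injective χ hinj
    _ = langCard X Fn := Nat.card_coe_set_eq _

lemma card_H_mul_image_rep_le [Group G] [DecidableEq G] (H : Subgroup G) [Fintype ↥H]
    (Fn : Finset G) :
    Fintype.card ↥H * (Fn.image (rep H)).card ≤
      Fn.card + ∑ h : ↥H, ((Fn.image (fun x => (h : G) * x)) ∆ Fn).card := by
  classical
  set Cm := Fn.image (rep H) with hCm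
  set B := (Finset.univ ×ˢ Cm).image (fun p : ↥H × G => (p.1 : G) * p.2) with hB
  have hcardB : B.card = Fintype.card ↥H * Cm.card := by
    rw [hB, Finset.card_image_of_injOn, Finset.card_product, Finset.card_univ]
    intro p hp q hq hpq
    have hpq' : (p.1 : G) * p.2 = (q.1 : G) * q.2 := hpq
    have hp2 : p.2 ∈ Cm := (Finset.mem_product.mp hp).2
    have hq2 : q.2 ∈ Cm := (Finset.mem_product.mp hq).2
    have h22 : p.2 = q.2 := by
      have hq2' : q.2 = ((q.1⁻¹ * p.1 : ↥H) : G) * p.2 := by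
        push_cast
        rw [mul_assoc, hpq']
        group
      have := congrArg (rep H) hq2'
      rw [rep_H_mul, rep_of_mem_image H hp2, rep_of_mem_image H hq2] at this
      exact this.symm
    have h11 : p.1 = q.1 := by
      rw [h22] at hpq'
      have : (p.1 : G) = q.1 := mul_right_cancel hpq'
      exact Subtype.ext this
    exact Prod.ext h11 h22
  have hsub : B ⊆ Fn ∪ Finset.univ.biUnion
      (fun h : ↥H => (Fn.image (fun x => (h : G) * x)) \ Fn) := by
    intro b hb
    obtain ⟨p, hp, rfl⟩ := Finset.mem_image.mp hb
    obtain ⟨a, ha, hra⟩ := Finset.mem_image.mp (Finset.mem_product.mp hp).2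
    set h'' : ↥H := p.1 * ⟨rep H a * a⁻¹, rep_spec' H a⟩ with hh''
    have hb' : (p.1 : G) * p.2 = (h'' : G) * a := by
      rw [hh'']
      push_cast
      rw [← hra]
      group
    by_cases hbFn : (p.1 : G) * p.2 ∈ Fn
    · exact Finset.mem_union_left _ hbFn
    · refine Finset.mem_union_right _ (Finset.mem_biUnion.mpr ⟨h'', Finset.mem_univ _, ?_⟩)
      rw [Finset.mem_sdiff]
      exact ⟨hb' ▸ Finset.mem_image_of_mem _ ha, hbFn⟩
  calc Fintype.card ↥H * Cm.card = B.card := hcardB.symm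
    _ ≤ (Fn ∪ Finset.univ.biUnion
        (fun h : ↥H => (Fn.image (fun x => (h : G) * x)) \ Fn)).card :=
      Finset.card_le_card hsub
    _ ≤ Fn.card + (Finset.univ.biUnion
        (fun h : ↥H => (Fn.image (fun x => (h : G) * x)) \ Fn)).card :=
      Finset.card_union_le _ _
    _ ≤ Fn.card + ∑ h : ↥H, ((Fn.image (fun x => (h : G) * x)) \ Fn).card := by
      gcongr
      exact Finset.card_biUnion_le
    _ ≤ Fn.card + ∑ h : ↥H, ((Fn.image (fun x => (h : G) * x)) ∆ Fn).card := by
      gcongr with h _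
      exact sdiff_subset_symmDiff _ _

lemma card_le_H_mul_filter [Group G] [DecidableEq G] (H : Subgroup G) [Fintype ↥H]
    (Fn : Finset G) [DecidablePred fun t => ∀ h : ↥H, (h : G) * t ∈ Fn] :
    Fn.card ≤ Fintype.card ↥H *
        ((Fn.image (rep H)).filter (fun t => ∀ h : ↥H, (h : G) * t ∈ Fn)).card
      + ∑ h : ↥H, ((Fn.image (fun x => (h : G) * x)) ∆ Fn).card := by
  classical
  set Cin := (Fn.image (rep H)).filter (fun t => ∀ h : ↥H, (h : G) * t ∈ Fn) with hCin
  set Bin := (Finset.univ ×ˢ Cin).image (fun p : ↥H × G => (p.1 : G) * p.2) with hBin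
  have hsub : Fn ⊆ Bin ∪ Finset.univ.biUnion
      (fun h : ↥H => Fn \ (Fn.image (fun x => (h : G) * x))) := by
    intro g hg
    by_cases hall : ∀ h : ↥H, (h : G) * g ∈ Fn
    · apply Finset.mem_union_left
      rw [hBin, Finset.mem_image]
      refine ⟨(⟨g * (rep H g)⁻¹, rep_spec H g⟩, rep H g), ?_, rep_decomp H g⟩
      rw [Finset.mem_product]
      refine ⟨Finset.mem_univ _, ?_⟩
      rw [hCin, Finset.mem_filter]
      refine ⟨Finset.mem_image_of_mem _ hg, fun h => ?_⟩
      have : (h : G) * rep H g = ((h * ⟨rep H g * g⁻¹, rep_spec' H g⟩ : ↥H) : G) * g := by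
        push_cast; group
      rw [this]
      exact hall _
    · push_neg at hall
      obtain ⟨h, hh⟩ := hall
      apply Finset.mem_union_right
      refine Finset.mem_biUnion.mpr ⟨h⁻¹, Finset.mem_univ _, ?_⟩
      rw [Finset.mem_sdiff]
      refine ⟨hg, fun hmem => ?_⟩
      obtain ⟨x, hx, hxg⟩ := Finset.mem_image.mp hmem
      apply hh
      have : (h : G) * g = x := by rw [← hxg]; push_cast; group
      rw [this]; exact hx
  calc Fn.card ≤ (Bin ∪ Finset.univ.biUnion
        (fun h : ↥H => Fn \ (Fn.image (fun x => (h : G) * x)))).card :=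
      Finset.card_le_card hsub
    _ ≤ Bin.card + (Finset.univ.biUnion
        (fun h : ↥H => Fn \ (Fn.image (fun x => (h : G) * x)))).card :=
      Finset.card_union_le _ _
    _ ≤ Fintype.card ↥H * Cin.card
        + ∑ h : ↥H, (Fn \ (Fn.image (fun x => (h : G) * x))).card := by
      gcongr
      · calc Bin.card ≤ (Finset.univ ×ˢ Cin).card := Finset.card_image_le
          _ = Fintype.card ↥H * Cin.card := by
            rw [Finset.card_product, Finset.card_univ]
      · exact Finset.card_biUnion_le
    _ ≤ Fintype.card ↥H * Cin.card
        + ∑ h : ↥H, ((Fn.image (fun x => (h : G) * x)) ∆ Fn).card := by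
      gcongr with h _
      exact symmDiff_comm_subset _ _

theorem entropy_freeExt [Group G] {A : Type*} [Fintype A] (H : Subgroup G) [Finite ↥H]
    (Y : Set ((↥H) → A)) (hYne : Y.Nonempty)
    (hYinv : ∀ y ∈ Y, ∀ h₀ : ↥H, (fun h => y (h * h₀)) ∈ Y)
    (F : ℕ → Finset G) (hF : IsFolner F) :
    Filter.Tendsto (fun n => Real.log (langCard (freeExt H Y) (F n)) / ((F n).card : ℝ))
      Filter.atTop (nhds (Real.log Y.ncard / (Nat.card ↥H : ℝ))) := by
  classical
  haveI : Fintype ↥H := Fintype.ofFinite _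
  set k : ℕ := Fintype.card ↥H with hkdef
  have hkcard : (Nat.card ↥H : ℝ) = (k : ℝ) := by rw [Nat.card_eq_fintype_card]
  have hk0 : (0 : ℝ) < (k : ℝ) := by
    have : 0 < k := Fintype.card_pos
    exact_mod_cast this
  set m := Y.ncard with hmdef
  have hm1 : 1 ≤ m := (Set.ncard_pos (Set.toFinite Y)).mpr hYne
  have hlogm : 0 ≤ Real.log m := Real.log_nonneg (by exact_mod_cast hm1)
  set B : ℕ → ℝ := fun n => ((F n).card : ℝ) with hBdef
  have hB0 : ∀ n, 0 < B n := fun n => by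
    have : 0 < (F n).card := Finset.card_pos.mpr (hF.1 n)
    show (0 : ℝ) < ((F n).card : ℝ)
    exact_mod_cast this
  set S : ℕ → ℝ := fun n =>
    ∑ h : ↥H, ((((F n).image (fun x => (h : G) * x)) ∆ (F n)).card : ℝ) with hSdef
  set s : ℕ → ℝ := fun n => S n / B n with hsdef
  have hs0 : Filter.Tendsto s Filter.atTop (nhds 0) := by
    have : ∀ (h : ↥H), Filter.Tendsto
        (fun n => (((((F n).image (fun x => (h : G) * x)) ∆ (F n)).card : ℝ)) / B n)
        Filter.atTop (nhds 0) := by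
      intro h
      have := hF.2.2 (h : G)
      convert this using 2 with n
      congr 1
      rw [← Finset.coe_image, ← Finset.coe_symmDiff, Set.ncard_coe_finset]
    have hsum := tendsto_finset_sum Finset.univ (fun h _ => this h)
    simp only [Finset.sum_const_zero] at hsum
    have : s = fun n => ∑ h : ↥H,
        (((((F n).image (fun x => (h : G) * x)) ∆ (F n)).card : ℝ)) / B n := by
      funext n
      rw [hsdef]
      simp only [hSdef]
      rw [Finset.sum_div]
    rw [this]
    exact hsum
  set a : ℕ → ℕ := fun n =>
    (((F n).image (rep H)).filter (fun t => ∀ h : ↥H, (h : G) * t ∈ F n)).card with hadef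
  set c : ℕ → ℕ := fun n => ((F n).image (rep H)).card with hcdef
  have hac : ∀ n, a n ≤ c n := fun n => Finset.card_le_card (Finset.filter_subset _ _)
  have h3 : ∀ n, (k : ℝ) * c n ≤ B n + S n := by
    intro n
    have := card_H_mul_image_rep_le H (F n)
    have := (Nat.cast_le (α := ℝ)).mpr this
    push_cast at this ⊢
    convert this using 2
  have h4 : ∀ n, B n ≤ (k : ℝ) * a n + S n := by
    intro n
    have := card_le_H_mul_filter H (F n)
    have := (Nat.cast_le (α := ℝ)).mpr this
    push_cast at this ⊢
    convert this using 2
  have hcB : ∀ n, (c n : ℝ) / B n ≤ (1 + s n) / k := by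
    intro n
    rw [div_le_div_iff₀ (hB0 n) hk0]
    have hsB : s n * B n = S n := div_mul_cancel₀ _ (hB0 n).ne'
    have := h3 n
    nlinarith [hB0 n]
  have haB : ∀ n, (1 - s n) / k ≤ (a n : ℝ) / B n := by
    intro n
    rw [div_le_div_iff₀ hk0 (hB0 n)]
    have hsB : s n * B n = S n := div_mul_cancel₀ _ (hB0 n).ne'
    have := h4 n
    nlinarith [hB0 n]
  have hlim1 : Filter.Tendsto (fun n => (1 - s n) / (k : ℝ)) Filter.atTop (nhds (1 / k)) := by
    have : Filter.Tendsto (fun n => 1 - s n) Filter.atTop (nhds 1) := by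
      have := (tendsto_const_nhds (x := (1:ℝ)) (f := Filter.atTop (α := ℕ))).sub hs0
      simpa using this
    exact this.div_const _
  have hlim2 : Filter.Tendsto (fun n => (1 + s n) / (k : ℝ)) Filter.atTop (nhds (1 / k)) := by
    have : Filter.Tendsto (fun n => 1 + s n) Filter.atTop (nhds 1) := by
      have := (tendsto_const_nhds (x := (1:ℝ)) (f := Filter.atTop (α := ℕ))).add hs0
      simpa using this
    exact this.div_const _
  have haBc : ∀ n, (a n : ℝ) / B n ≤ (1 + s n) / k := fun n =>
    le_trans (by gcongr; exact_mod_cast hac n) (hcB n)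
  have haBlim : Filter.Tendsto (fun n => (a n : ℝ) / B n) Filter.atTop (nhds (1 / k)) :=
    tendsto_of_tendsto_of_tendsto_of_le_of_le hlim1 hlim2 haB haBc
  have hcBlim : Filter.Tendsto (fun n => (c n : ℝ) / B n) Filter.atTop (nhds (1 / k)) :=
    tendsto_of_tendsto_of_tendsto_of_le_of_le hlim1 hlim2
      (fun n => le_trans (haB n) (by gcongr; exact_mod_cast hac n)) hcB
  set L : ℕ → ℕ := fun n => langCard (freeExt H Y) (F n) with hLdef
  have hLlo : ∀ n, m ^ a n ≤ L n := fun n => pow_le_langCard H Y hYne hYinv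
  have hLhi : ∀ n, L n ≤ m ^ c n := fun n => langCard_le_pow H Y (F n)
  have hLpos : ∀ n, (0 : ℝ) < (L n : ℝ) := by
    intro n
    have h1 : 1 ≤ m ^ a n := Nat.one_le_pow _ _ hm1
    have : 1 ≤ L n := le_trans h1 (hLlo n)
    exact_mod_cast Nat.lt_of_lt_of_le Nat.zero_lt_one this
  have hlog_lo : ∀ n, (a n : ℝ) * Real.log m ≤ Real.log (L n) := by
    intro n
    have hpow : (0 : ℝ) < ((m : ℝ)) ^ a n := by positivity
    have hcast : ((m : ℝ)) ^ a n ≤ (L n : ℝ) := by exact_mod_cast hLlo n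
    have := Real.log_le_log hpow hcast
    rwa [Real.log_pow] at this
  have hlog_hi : ∀ n, Real.log (L n) ≤ (c n : ℝ) * Real.log m := by
    intro n
    have hcast : (L n : ℝ) ≤ ((m : ℝ)) ^ c n := by exact_mod_cast hLhi n
    have := Real.log_le_log (hLpos n) hcast
    rwa [Real.log_pow] at this
  have hle1 : ∀ n, (a n : ℝ) / B n * Real.log m ≤ Real.log (L n) / B n := by
    intro n
    rw [div_mul_eq_mul_div]
    gcongr
    exact hlog_lo n
  have hle2 : ∀ n, Real.log (L n) / B n ≤ (c n : ℝ) / B n * Real.log m := by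
    intro n
    rw [div_mul_eq_mul_div]
    gcongr
    exact hlog_hi n
  have hlo_lim : Filter.Tendsto (fun n => (a n : ℝ) / B n * Real.log m)
      Filter.atTop (nhds (1 / k * Real.log m)) := haBlim.mul_const _
  have hhi_lim : Filter.Tendsto (fun n => (c n : ℝ) / B n * Real.log m)
      Filter.atTop (nhds (1 / k * Real.log m)) := hcBlim.mul_const _
  have hfinal := tendsto_of_tendsto_of_tendsto_of_le_of_le hlo_lim hhi_lim hle1 hle2
  have heq : 1 / (k : ℝ) * Real.log m = Real.log m / (Nat.card ↥H : ℝ) := by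
    rw [hkcard, one_div, inv_mul_eq_div]
  rwa [heq] at hfinal

lemma sft_decomp [Group G] {A : Type*} (X : Set (G → A)) (hX : IsSFT X) :
    ∃ (S : Finset G) (Y : Set ((↥(Subgroup.closure (S : Set G))) → A)),
      X = freeExt (Subgroup.closure (S : Set G)) Y ∧
      (∀ y ∈ Y, ∀ h₀ : ↥(Subgroup.closure (S : Set G)), (fun h => y (h * h₀)) ∈ Y) ∧
      (X.Nonempty → Y.Nonempty) := by
  obtain ⟨F₀, P, hP⟩ := hX
  set H := Subgroup.closure (F₀ : Set G) with hH
  set ι : ↥F₀ → ↥H := fun f => ⟨(f : G), Subgroup.subset_closure f.2⟩ with hι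
  set Y : Set ((↥H) → A) :=
    {y | ∀ h₀ : ↥H, (fun f : ↥F₀ => y (ι f * h₀)) ∉ P} with hY
  have hXY : X = freeExt H Y := by
    ext x
    rw [hP]
    constructor
    · intro hx g h₀
      have heq : (fun f : ↥F₀ => (fun h : ↥H => x ((h : G) * g)) (ι f * h₀))
          = fun f : ↥F₀ => x ((f : G) * ((h₀ : G) * g)) := by
        funext f
        show x (((ι f * h₀ : ↥H) : G) * g) = x ((f : G) * ((h₀ : G) * g))
        congr 1
        push_cast
        group
        rfl
      rw [heq]
      exact hx ((h₀ : G) * g)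
    · intro hx g
      have := hx g (1 : ↥H)
      have heq : (fun f : ↥F₀ => (fun h : ↥H => x ((h : G) * g)) (ι f * 1))
          = restrictF F₀ (shift g x) := by
        funext f
        show x (((ι f * 1 : ↥H) : G) * g) = x ((f : G) * g)
        congr 1
        push_cast
        group
        rfl
      rwa [heq] at this
  refine ⟨F₀, Y, hXY, ?_, ?_⟩
  · intro y hy h₀ h₁
    have := hy (h₁ * h₀)
    have heq : (fun f : ↥F₀ => (fun h : ↥H => y (h * h₀)) (ι f * h₁))
        = fun f : ↥F₀ => y (ι f * (h₁ * h₀)) := by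
      funext f
      show y ((ι f * h₁) * h₀) = y (ι f * (h₁ * h₀))
      rw [mul_assoc]
    rw [heq]
    exact this
  · rintro ⟨x, hx⟩
    rw [hXY] at hx
    exact ⟨_, hx 1⟩

theorem SFT_entropies_of_locallyFinite [Group G] [Countable G] (hLF : IsLocallyFinite G)
    (F : ℕ → Finset G) (hF : IsFolner F) (r : ℝ) :
    (∃ (A : Type) (_ : Fintype A) (_ : Nonempty A) (X : Set (G → A)),
        IsSFT X ∧ X.Nonempty ∧
        Filter.Tendsto (fun n => Real.log (langCard X (F n)) / ((F n).card : ℝ))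
          Filter.atTop (nhds r))
      ↔ (∃ (H : Subgroup G), Finite ↥H ∧ ∃ n : ℕ, 1 ≤ n ∧
          r = Real.log n / (Nat.card ↥H : ℝ)) := by
  constructor
  · rintro ⟨A, hfA, hneA, X, hSFT, hXne, htend⟩
    obtain ⟨S, Y, hXY, hYinv, hYne'⟩ := sft_decomp X hSFT
    haveI : Finite ↥(Subgroup.closure (S : Set G)) := hLF S
    have hYne := hYne' hXne
    have hent := entropy_freeExt (Subgroup.closure (S : Set G)) Y hYne hYinv F hF
    rw [← hXY] at hent
    exact ⟨Subgroup.closure (S : Set G), inferInstance, Y.ncard,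
      (Set.ncard_pos (Set.toFinite Y)).mpr hYne, tendsto_nhds_unique htend hent⟩
  · rintro ⟨H, hHfin, n, hn1, hr⟩
    haveI := hHfin
    haveI : Fintype ↥H := Fintype.ofFinite _
    set F₀ : Finset G := (H : Set G).toFinset with hF₀
    set P : Set ((↥F₀) → Fin n) := {w | ∃ f f' : ↥F₀, w f ≠ w f'} with hP
    set X : Set (G → Fin n) := {x | ∀ g : G, restrictF F₀ (shift g x) ∉ P} with hX
    set Y : Set ((↥H) → Fin n) := {y | ∀ h h' : ↥H, y h = y h'} with hY
    have hmem : ∀ a : G, a ∈ F₀ ↔ a ∈ H := fun a => Set.mem_toFinset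
    have hXY : X = freeExt H Y := by
      ext x
      simp only [hX, hY, Set.mem_setOf_eq, freeExt]
      constructor
      · intro hx g h h'
        have := hx g
        simp only [hP, Set.mem_setOf_eq, not_exists, not_not] at this
        exact this ⟨(h : G), (hmem _).mpr h.2⟩ ⟨(h' : G), (hmem _).mpr h'.2⟩
      · intro hx g hcon
        simp only [hP, Set.mem_setOf_eq] at hcon
        obtain ⟨f, f', hne⟩ := hcon
        exact hne (hx g ⟨(f : G), (hmem _).mp f.2⟩ ⟨(f' : G), (hmem _).mp f'.2⟩)
    have hYinv : ∀ y ∈ Y, ∀ h₀ : ↥H, (fun h => y (h * h₀)) ∈ Y := by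
      intro y hy h₀ h h'
      exact hy _ _
    have a0 : Fin n := ⟨0, hn1⟩
    have hYne : Y.Nonempty := ⟨fun _ => a0, fun _ _ => rfl⟩
    have hXne : X.Nonempty := by
      refine ⟨fun _ => a0, ?_⟩
      rw [hXY]
      intro g h h'
      rfl
    have hinj : Function.Injective (fun a : Fin n => fun _ : ↥H => a) := by
      intro a b hab
      exact congrFun hab 1
    have hYncard : Y.ncard = n := by
      have hYr : Y = (fun a : Fin n => fun _ : ↥H => a) '' Set.univ := by
        rw [Set.image_univ]
        ext y
        simp only [hY, Set.mem_setOf_eq, Set.mem_range]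
        constructor
        · intro hy
          exact ⟨y 1, by funext h; exact hy 1 h⟩
        · rintro ⟨a, rfl⟩ h h'
          rfl
      rw [hYr, Set.ncard_image_of_injective _ hinj, Set.ncard_univ,
        Nat.card_eq_fintype_card, Fintype.card_fin]
    have hent := entropy_freeExt H Y hYne hYinv F hF
    rw [← hXY, hYncard] at hent
    exact ⟨Fin n, inferInstance, ⟨a0⟩, X, ⟨F₀, P, rfl⟩, hXne, hr ▸ hent⟩

end LFPaper
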